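/- One-dimensional uniform upper bound from unique ergodicity: if g : 𝕋 → ℝ is continuous with ln|g| ∈ L¹(𝕋) and α is irrational, then for every ε > 0 there exists N such that for all n ≥ N and all x ∈ 𝕋, ∏_{j=0}^{n−1} |g(x + jα)| ≤ e^{n(∫_𝕋 ln|g| dθ + ε)}. -/

import Mathlib

open Real

-- step along β: forward multiples of β are |β|-dense mod 1, with bounded time
lemma step_dense (β : ℝ) (hβ : β ≠ 0) (t : ℝ) :
    ∃ m : ℕ, m ≤ ⌈1 / |β|⌉₊ ∧ ∃ k : ℤ, |t - m * β - k| ≤ |β| := by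
  set γ := |β| with hγdef
  have hγ : 0 < γ := abs_pos.mpr hβ
  set u : ℝ := if 0 < β then t else -t with hu
  set s : ℝ := Int.fract u with hs
  have hs0 : 0 ≤ s := Int.fract_nonneg u
  have hs1 : s < 1 := Int.fract_lt_one u
  set m : ℕ := ⌊s / γ⌋₊ with hm
  have hmle : (m : ℝ) ≤ s / γ := Nat.floor_le (by positivity)
  have hmgt : s / γ < m + 1 := Nat.lt_floor_add_one _
  have h1 : (m:ℝ) * γ ≤ s := by
    rw [← le_div_iff₀ hγ]; exact hmle
  have h2 : s < (m + 1 : ℝ) * γ := by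
    rw [← div_lt_iff₀ hγ]; exact hmgt
  have hmM : m ≤ ⌈1 / γ⌉₊ := by
    have : (m : ℝ) ≤ 1 / γ := by
      refine hmle.trans ?_
      gcongr
    calc m ≤ ⌈(m : ℝ)⌉₊ := by simp
      _ ≤ ⌈1 / γ⌉₊ := Nat.ceil_le_ceil this
  refine ⟨m, hmM, ?_⟩
  have hfr : s = u - ⌊u⌋ := rfl
  rcases lt_or_gt_of_ne hβ with hneg | hpos
  · -- β < 0, γ = -β, u = -t
    have hγβ : γ = -β := abs_of_neg hneg
    have hut : u = -t := by rw [hu, if_neg (not_lt.mpr hneg.le)]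
    refine ⟨-⌊u⌋, ?_⟩
    have : t - m * β - (-⌊u⌋ : ℤ) = -(s - m * γ) := by
      push_cast
      rw [hfr, hut, hγβ]; ring
    rw [this, abs_neg, abs_of_nonneg (by linarith)]
    nlinarith
  · have hγβ : γ = β := abs_of_pos hpos
    have hut : u = t := by rw [hu, if_pos hpos]
    refine ⟨⌊u⌋, ?_⟩
    have : t - m * β - (⌊u⌋ : ℤ) = s - m * γ := by
      rw [hfr, hut, hγβ]; ring
    rw [this, abs_of_nonneg (by linarith)]
    nlinarith

lemma orbit_dense {α : ℝ} (hα : Irrational α) {δ : ℝ} (hδ : 0 < δ) :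
    ∃ M : ℕ, ∀ t : ℝ, ∃ m : ℕ, m ≤ M ∧ ∃ k : ℤ, |t - m * α - k| ≤ δ := by
  set n : ℕ := ⌈1 / δ⌉₊ + 1 with hn
  have hnpos : 0 < n := Nat.succ_pos _
  obtain ⟨r, hr0, hrn, hr⟩ := Real.exists_nat_abs_mul_sub_round_le α hnpos
  set β : ℝ := r * α - round (r * α) with hβ
  have hβ0 : β ≠ 0 := by
    intro h
    have hirr : Irrational (r * α) := hα.natCast_mul hr0.ne'
    exact hirr.ne_int (round (r * α)) (by linarith [sub_eq_zero.mp h])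
  have hβδ : |β| ≤ δ := by
    refine hr.trans ?_
    rw [div_le_iff₀ (by positivity)]
    have h1 : 1 / δ ≤ (n : ℝ) := by
      calc 1 / δ ≤ (⌈1 / δ⌉₊ : ℝ) := Nat.le_ceil _
        _ ≤ n := by exact_mod_cast Nat.le_succ _
    calc (1:ℝ) = δ * (1/δ) := by field_simp
      _ ≤ δ * (n + 1) := by nlinarith
  refine ⟨r * ⌈1 / |β|⌉₊, fun t => ?_⟩
  obtain ⟨m, hm, k, hk⟩ := step_dense β hβ0 t
  refine ⟨m * r, by calc m * r ≤ ⌈1 / |β|⌉₊ * r := Nat.mul_le_mul_right _ hm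
    _ = r * ⌈1 / |β|⌉₊ := Nat.mul_comm _ _, k - m * round (r * α), ?_⟩
  have : t - (m * r : ℕ) * α - ((k - m * round (r * α) : ℤ) : ℝ) = t - m * β - k := by
    push_cast; rw [hβ]; ring
  rw [this]
  exact hk.trans hβδ

lemma per_unifCont {F : ℝ → ℝ} (hper : Function.Periodic F 1) (hc : Continuous F)
    {ε : ℝ} (hε : 0 < ε) :
    ∃ δ > 0, ∀ u v : ℝ, |u - v| ≤ δ → |F u - F v| ≤ ε := by
  have hcs : IsCompact (Set.Icc (-1 : ℝ) 2) := isCompact_Icc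
  have huc : UniformContinuousOn F (Set.Icc (-1 : ℝ) 2) :=
    hcs.uniformContinuousOn_of_continuous hc.continuousOn
  rw [Metric.uniformContinuousOn_iff] at huc
  obtain ⟨δ₀, hδ₀, h⟩ := huc ε hε
  refine ⟨min (δ₀ / 2) 1, by positivity, fun u v huv => ?_⟩
  have hδ1 : min (δ₀ / 2) 1 ≤ 1 := min_le_right _ _
  have hδ2 : min (δ₀ / 2) 1 ≤ δ₀ / 2 := min_le_left _ _
  set nn : ℤ := ⌊u⌋ with hnn
  have h1 : F (u - nn * 1) = F u := hper.sub_int_mul_eq nn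
  have h2 : F (v - nn * 1) = F v := hper.sub_int_mul_eq nn
  have hf1 : u - (⌊u⌋:ℝ) < 1 := by
    have := Int.fract_lt_one u; unfold Int.fract at this; linarith
  have hf0 : 0 ≤ u - (⌊u⌋:ℝ) := by
    have := Int.fract_nonneg u; unfold Int.fract at this; linarith
  have hu1 : u - nn * 1 ∈ Set.Icc (-1 : ℝ) 2 := by
    simp only [hnn, mul_one, Set.mem_Icc]
    constructor <;> linarith
  have hdistuv : |u - v| ≤ min (δ₀ / 2) 1 := huv
  have hv1 : v - nn * 1 ∈ Set.Icc (-1 : ℝ) 2 := by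
    simp only [hnn, mul_one, Set.mem_Icc]
    have h1 : |u - v| ≤ 1 := hdistuv.trans hδ1
    rw [abs_le] at h1
    constructor <;> linarith
  have := h _ hu1 _ hv1 (by
    rw [Real.dist_eq]
    have : u - nn * 1 - (v - nn * 1) = u - v := by ring
    rw [this]
    calc |u - v| ≤ δ₀ / 2 := hdistuv.trans hδ2
      _ < δ₀ := by linarith)
  rw [Real.dist_eq, h1, h2] at this
  exact this.le

lemma birkhoff_upper {F : ℝ → ℝ} (hper : Function.Periodic F 1) (hc : Continuous F)
    {α : ℝ} (hα : Irrational α) {ε : ℝ} (hε : 0 < ε) :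
    ∃ N : ℕ, ∀ n ≥ N, ∀ x : ℝ,
      ∑ j ∈ Finset.range n, F (x + j * α) ≤ n * ((∫ θ in (0:ℝ)..1, F θ) + ε) := by
  obtain ⟨C, hC⟩ := (hper.isBounded_of_continuous one_ne_zero hc).exists_norm_le
  have hCb : ∀ x, |F x| ≤ C := fun x => hC _ (Set.mem_range_self x)
  have hC0 : 0 ≤ C := (abs_nonneg _).trans (hCb 0)
  obtain ⟨δ, hδ, hδF⟩ := per_unifCont hper hc (show (0:ℝ) < ε / 4 by positivity)
  obtain ⟨M, hM⟩ := orbit_dense hα hδ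
  set J : ℝ := ∫ θ in (0:ℝ)..1, F θ with hJ
  set S : ℕ → ℝ → ℝ := fun n x => ∑ j ∈ Finset.range n, F (x + j * α) with hS
  -- periodicity in integer shifts
  have hper' : ∀ (z : ℝ) (k : ℤ), F (z + k) = F z := by
    intro z k
    have := hper.sub_int_mul_eq (x := z + k) k
    simpa using this.symm
  -- key near-constancy estimate
  have key : ∀ (n : ℕ) (x y : ℝ), S n y ≤ S n x + n * (ε / 4) + 2 * M * C := by
    intro n x y
    obtain ⟨m, hmM, k, hk⟩ := hM (y - x)
    set e : ℝ := y - x - m * α - k with he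
    have term : ∀ j : ℕ, F (y + j * α) ≤ F (x + (m + j : ℕ) * α) + ε / 4 := by
      intro j
      have hyd : y + j * α = (x + (m + j : ℕ) * α + e) + k := by
        push_cast; rw [he]; ring
      have h1 : F (y + j * α) = F (x + (m + j : ℕ) * α + e) := by rw [hyd, hper']
      have h2 : |F (x + (m + j : ℕ) * α + e) - F (x + (m + j : ℕ) * α)| ≤ ε / 4 :=
        hδF _ _ (by simpa using hk)
      rw [h1]
      have := (abs_le.mp h2).2
      linarith
    set u : ℕ → ℝ := fun j => F (x + j * α) with hu
    have hsum1 : S n y ≤ (∑ j ∈ Finset.range n, u (m + j)) + n * (ε / 4) := by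
      calc S n y ≤ ∑ j ∈ Finset.range n, (u (m + j) + ε / 4) := Finset.sum_le_sum fun j _ => term j
        _ = (∑ j ∈ Finset.range n, u (m + j)) + n * (ε / 4) := by
            rw [Finset.sum_add_distrib, Finset.sum_const, Finset.card_range]
            ring_nf
    have hshift : (∑ j ∈ Finset.range n, u (m + j)) = ∑ j ∈ Finset.Ico m (m + n), u j := by
      rw [Finset.sum_Ico_eq_sum_range]
      simp
    have hsplit : (∑ j ∈ Finset.Ico m (m + n), u j)
        = S n x + ((∑ j ∈ Finset.Ico n (m + n), u j) - ∑ j ∈ Finset.range m, u j) := by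
      rw [Finset.sum_Ico_eq_sub u (Nat.le_add_right m n),
        Finset.sum_Ico_eq_sub u (Nat.le_add_left n m)]
      have : S n x = ∑ j ∈ Finset.range n, u j := rfl
      rw [this]; ring
    have habs1 : |∑ j ∈ Finset.Ico n (m + n), u j| ≤ M * C := by
      calc |∑ j ∈ Finset.Ico n (m + n), u j| ≤ ∑ j ∈ Finset.Ico n (m + n), |u j| :=
            Finset.abs_sum_le_sum_abs _ _
        _ ≤ ∑ _j ∈ Finset.Ico n (m + n), C := Finset.sum_le_sum fun j _ => hCb _
        _ = m * C := by rw [Finset.sum_const, Nat.card_Ico]; simp [nsmul_eq_mul]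
        _ ≤ M * C := by
            have : (m : ℝ) ≤ M := Nat.cast_le.mpr hmM
            nlinarith
    have habs2 : |∑ j ∈ Finset.range m, u j| ≤ M * C := by
      calc |∑ j ∈ Finset.range m, u j| ≤ ∑ j ∈ Finset.range m, |u j| :=
            Finset.abs_sum_le_sum_abs _ _
        _ ≤ ∑ _j ∈ Finset.range m, C := Finset.sum_le_sum fun j _ => hCb _
        _ = m * C := by rw [Finset.sum_const, Finset.card_range]; simp [nsmul_eq_mul]
        _ ≤ M * C := by
            have : (m : ℝ) ≤ M := Nat.cast_le.mpr hmM
            nlinarith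
    have := abs_le.mp habs1
    have := abs_le.mp habs2
    calc S n y ≤ (∑ j ∈ Finset.range n, u (m + j)) + n * (ε / 4) := hsum1
      _ = S n x + ((∑ j ∈ Finset.Ico n (m + n), u j) - ∑ j ∈ Finset.range m, u j)
          + n * (ε / 4) := by rw [hshift, hsplit]
      _ ≤ S n x + n * (ε / 4) + 2 * M * C := by linarith
  -- integral of Birkhoff sum
  have hScont : ∀ n : ℕ, Continuous (S n) := by
    intro n
    apply continuous_finset_sum
    intro j _
    exact hc.comp (continuous_id.add continuous_const)
  have hSint : ∀ n : ℕ, (∫ x in (0:ℝ)..1, S n x) = n * J := by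
    intro n
    have hint : ∀ j ∈ Finset.range n,
        IntervalIntegrable (fun x => F (x + (j:ℝ) * α)) MeasureTheory.volume 0 1 :=
      fun j _ => (hc.comp (continuous_id.add continuous_const)).intervalIntegrable 0 1
    have hstep : (∫ x in (0:ℝ)..1, S n x)
        = ∑ j ∈ Finset.range n, ∫ x in (0:ℝ)..1, F (x + j * α) :=
      intervalIntegral.integral_finset_sum hint
    rw [hstep]
    have each : ∀ j : ℕ, (∫ x in (0:ℝ)..1, F (x + j * α)) = J := by
      intro j
      rw [intervalIntegral.integral_comp_add_right (fun x => F x) ((j : ℝ) * α)]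
      rw [hJ]
      have := hper.intervalIntegral_add_eq ((j : ℝ) * α) (0 : ℝ)
      simpa [add_comm] using this
    rw [Finset.sum_congr rfl fun j _ => each j, Finset.sum_const, Finset.card_range]
    simp [nsmul_eq_mul]

  have exists_pt : ∀ n : ℕ, ∃ x₀ : ℝ, S n x₀ ≤ n * J := by
    intro n
    by_contra hcon
    push_neg at hcon
    have hpos : 0 < ∫ x in (0:ℝ)..1, (S n x - n * J) := by
      apply intervalIntegral.intervalIntegral_pos_of_pos_on
      · exact ((hScont n).sub continuous_const).intervalIntegrable 0 1
      · intro x _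
        have := hcon x
        linarith
      · norm_num
    rw [intervalIntegral.integral_sub ((hScont n).intervalIntegrable 0 1)
      (continuous_const.intervalIntegrable 0 1), hSint n,
      intervalIntegral.integral_const] at hpos
    simp at hpos
  -- choose N
  set N : ℕ := ⌈2 * M * C / (ε / 2)⌉₊ + 1 with hN
  refine ⟨N, fun n hn x => ?_⟩
  obtain ⟨x₀, hx₀⟩ := exists_pt n
  have hnN : (N : ℝ) ≤ n := Nat.cast_le.mpr hn
  have hceil : 2 * M * C / (ε / 2) ≤ (N : ℝ) := by
    calc 2 * M * C / (ε / 2) ≤ (⌈2 * M * C / (ε / 2)⌉₊ : ℝ) := Nat.le_ceil _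
      _ ≤ (N:ℝ) := by rw [hN]; push_cast; linarith
  have hMC : 2 * M * C ≤ n * (ε / 2) := by
    rw [div_le_iff₀ (by positivity)] at hceil
    nlinarith
  calc S n x ≤ S n x₀ + n * (ε / 4) + 2 * M * C := key n x₀ x
    _ ≤ n * J + n * (ε / 4) + n * (ε / 2) := by linarith
    _ ≤ n * (J + ε) := by nlinarith [Nat.cast_nonneg (α := ℝ) n]

lemma trunc_log_integral {g : ℝ → ℝ} (hgcont : Continuous g)
    (hgint : IntervalIntegrable (fun θ => Real.log |g θ|) MeasureTheory.volume 0 1)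
    {ε : ℝ} (hε : 0 < ε) :
    ∃ M : ℕ, (∫ θ in (0:ℝ)..1, Real.log (max |g θ| (Real.exp (-(M:ℝ)))))
      ≤ (∫ θ in (0:ℝ)..1, Real.log |g θ|) + ε := by
  set L : ℝ → ℝ := fun θ => Real.log |g θ| with hL
  set f : ℕ → ℝ → ℝ := fun M θ => Real.log (max |g θ| (Real.exp (-(M:ℝ)))) with hf
  set h : ℕ → ℝ → ℝ := fun M θ => if g θ = 0 then 0 else f M θ with hh
  set μ := MeasureTheory.volume.restrict (Set.Ioc (0:ℝ) 1) with hμ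
  have hLint : MeasureTheory.Integrable L μ :=
    (intervalIntegrable_iff_integrableOn_Ioc_of_le zero_le_one).mp hgint
  have hfcont : ∀ M : ℕ, Continuous (f M) := by
    intro M
    apply Continuous.log
    · exact (hgcont.abs.max continuous_const)
    · intro x
      exact (lt_max_of_lt_right (Real.exp_pos _)).ne'
  have hZmeas : MeasurableSet {θ : ℝ | g θ = 0} := by
    have : {θ : ℝ | g θ = 0} = g ⁻¹' {0} := rfl
    rw [this]
    exact hgcont.measurable (measurableSet_singleton 0)
  have hhmeas : ∀ M : ℕ, MeasureTheory.AEStronglyMeasurable (h M) μ := by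
    intro M
    refine (Measurable.ite hZmeas measurable_const (hfcont M).measurable).aestronglyMeasurable
  have hbound : ∀ (M : ℕ) (θ : ℝ), ‖h M θ‖ ≤ |L θ| := by
    intro M θ
    rw [Real.norm_eq_abs, hh]
    by_cases hz : g θ = 0
    · simp [hz]
    · simp only [if_neg hz]
      have ha : 0 < |g θ| := abs_pos.mpr hz
      have hc1 : Real.exp (-(M:ℝ)) ≤ 1 := Real.exp_le_one_iff.mpr (neg_nonpos.mpr (Nat.cast_nonneg M))
      have h1 : L θ ≤ f M θ := Real.log_le_log ha (le_max_left _ _)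
      have h2 : f M θ ≤ |L θ| := by
        rcases le_total (Real.exp (-(M:ℝ))) (|g θ|) with hle | hle
        · rw [hf]
          simp only [max_eq_left hle]
          exact le_abs_self _
        · rw [hf]
          simp only [max_eq_right hle]
          calc Real.log (Real.exp (-(M:ℝ))) ≤ Real.log 1 :=
                Real.log_le_log (Real.exp_pos _) hc1
            _ = 0 := Real.log_one
            _ ≤ |L θ| := abs_nonneg _
      rw [abs_le]
      exact ⟨by linarith [neg_abs_le (L θ)], h2⟩
  have hlim : ∀ θ : ℝ, Filter.Tendsto (fun M : ℕ => h M θ) Filter.atTop (nhds (L θ)) := by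
    intro θ
    by_cases hz : g θ = 0
    · have : (fun M : ℕ => h M θ) = fun _ => 0 := by
        funext M; simp [hh, hz]
      rw [this]
      have : L θ = 0 := by simp [hL, hz]
      rw [this]
      exact tendsto_const_nhds
    · have ha : 0 < |g θ| := abs_pos.mpr hz
      have htnd : Filter.Tendsto (fun M : ℕ => Real.exp (-(M:ℝ))) Filter.atTop (nhds 0) := by
        apply Real.tendsto_exp_atBot.comp
        exact Filter.tendsto_neg_atTop_atBot.comp tendsto_natCast_atTop_atTop
      have hev : ∀ᶠ M : ℕ in Filter.atTop, Real.exp (-(M:ℝ)) < |g θ| :=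
        htnd.eventually (gt_mem_nhds ha)
      refine Filter.Tendsto.congr' ?_ tendsto_const_nhds
      filter_upwards [hev] with M hM
      simp only [hh, if_neg hz, hf, max_eq_left hM.le, hL]
  have hDCT : Filter.Tendsto (fun M : ℕ => ∫ θ, h M θ ∂μ) Filter.atTop
      (nhds (∫ θ, L θ ∂μ)) := by
    apply MeasureTheory.tendsto_integral_of_dominated_convergence (fun θ => |L θ|) hhmeas
      hLint.abs
    · intro M
      exact Filter.Eventually.of_forall (hbound M)
    · exact Filter.Eventually.of_forall hlim
  have hIeq : (∫ θ, L θ ∂μ) = ∫ θ in (0:ℝ)..1, L θ := by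
    rw [intervalIntegral.integral_of_le zero_le_one]
  have hev2 : ∀ᶠ M : ℕ in Filter.atTop, (∫ θ, h M θ ∂μ) < (∫ θ, L θ ∂μ) + ε :=
    hDCT.eventually_lt_const (by linarith)
  obtain ⟨M, hM⟩ := hev2.exists
  refine ⟨M, ?_⟩
  have hfint : MeasureTheory.Integrable (f M) μ := by
    rw [hμ]
    exact (hfcont M).integrableOn_Ioc
  have hhint : MeasureTheory.Integrable (h M) μ :=
    MeasureTheory.Integrable.mono hLint.abs (hhmeas M)
      (Filter.Eventually.of_forall (fun θ => (hbound M θ).trans (le_abs_self _)))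
  have hmono : (∫ θ, f M θ ∂μ) ≤ ∫ θ, h M θ ∂μ := by
    apply MeasureTheory.integral_mono hfint hhint
    intro θ
    by_cases hz : g θ = 0
    · have h1 : h M θ = 0 := by simp [hh, hz]
      have h2 : f M θ = -(M:ℝ) := by
        show Real.log (max |g θ| (Real.exp (-(M:ℝ)))) = -(M:ℝ)
        rw [hz, abs_zero, max_eq_right (Real.exp_pos _).le, Real.log_exp]
      rw [h1, h2]
      simp
    · simp [hh, if_neg hz, le_refl]
  have hfeq : (∫ θ in (0:ℝ)..1, f M θ) = ∫ θ, f M θ ∂μ := by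
    rw [intervalIntegral.integral_of_le zero_le_one]
  calc (∫ θ in (0:ℝ)..1, f M θ) = ∫ θ, f M θ ∂μ := hfeq
    _ ≤ ∫ θ, h M θ ∂μ := hmono
    _ ≤ (∫ θ, L θ ∂μ) + ε := hM.le
    _ = (∫ θ in (0:ℝ)..1, L θ) + ε := by rw [hIeq]

/-- Uniform upper bound from unique ergodicity, 1-dimensional case: if `g` is continuous
and 1-periodic with `ln |g|` integrable on `[0,1]` and `α` is irrational, then for every
`ε > 0`, for all large `n` and all `x`,
`∏_{j=0}^{n-1} |g(x + jα)| ≤ exp (n (∫₀¹ ln|g| + ε))`. -/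
theorem stmt16 (g : ℝ → ℝ) (hgper : Function.Periodic g 1) (hgcont : Continuous g)
    (hgint : IntervalIntegrable (fun θ => Real.log |g θ|) MeasureTheory.volume 0 1)
    (α : ℝ) (hα : Irrational α) (ε : ℝ) (hε : 0 < ε) :
    ∃ N : ℕ, ∀ n ≥ N, ∀ x : ℝ,
      ∏ j ∈ Finset.range n, |g (x + j * α)|
        ≤ Real.exp (n * ((∫ θ in (0:ℝ)..1, Real.log |g θ|) + ε)) := by
  obtain ⟨M, hM⟩ := trunc_log_integral hgcont hgint (half_pos hε)
  set f : ℝ → ℝ := fun θ => Real.log (max |g θ| (Real.exp (-(M:ℝ)))) with hf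
  have hfper : Function.Periodic f 1 := by
    intro x
    simp only [hf, hgper x]
  have hfcont : Continuous f :=
    Continuous.log (hgcont.abs.max continuous_const)
      (fun x => (lt_max_of_lt_right (Real.exp_pos _)).ne')
  obtain ⟨N, hN⟩ := birkhoff_upper hfper hfcont hα (half_pos hε)
  refine ⟨N, fun n hn x => ?_⟩
  have hsum := hN n hn x
  calc ∏ j ∈ Finset.range n, |g (x + j * α)|
      ≤ ∏ j ∈ Finset.range n, max |g (x + j * α)| (Real.exp (-(M:ℝ))) :=
        Finset.prod_le_prod (fun j _ => abs_nonneg _) (fun j _ => le_max_left _ _)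
    _ = ∏ j ∈ Finset.range n, Real.exp (f (x + j * α)) := by
        refine Finset.prod_congr rfl fun j _ => ?_
        rw [hf, Real.exp_log (lt_max_of_lt_right (Real.exp_pos _))]
    _ = Real.exp (∑ j ∈ Finset.range n, f (x + j * α)) := (Real.exp_sum _ _).symm
    _ ≤ Real.exp (n * ((∫ θ in (0:ℝ)..1, f θ) + ε / 2)) := Real.exp_le_exp.mpr hsum
    _ ≤ Real.exp (n * ((∫ θ in (0:ℝ)..1, Real.log |g θ|) + ε)) := by
        apply Real.exp_le_exp.mpr
        apply mul_le_mul_of_nonneg_left ?_ (Nat.cast_nonneg n)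
        linarith
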